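/- Let R be a commutative ring with 1 and τ a refinable symmetric relation on the nonzero non-units. If R satisfies τ-r-ACCP, then R is τ-r-atomic: every regular nonzero non-unit has a τ-regular-factorization into τ-r-atoms. -/

import Mathlib

/-- A `τ`-factorization of `a`: `a = λ · a₁ ⋯ aₙ` with `λ` a unit, each `aᵢ` a
nonzero non-unit, and `aᵢ τ aⱼ` for all `i ≠ j` (via `Pairwise` and symmetry). -/
def IsTauFactorization {R : Type*} [CommRing R] (τ : R → R → Prop)
    (a lam : R) (l : List R) : Prop :=
  IsUnit lam ∧ (∀ b ∈ l, b ≠ 0 ∧ ¬ IsUnit b) ∧ l.Pairwise τ ∧ a = lam * l.prod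

/-- `τ` is refinable: replacing each factor of a `τ`-factorization by a
`τ`-factorization of that factor again yields a `τ`-factorization. -/
def TauRefinable {R : Type*} [CommRing R] (τ : R → R → Prop) : Prop :=
  ∀ (a lam : R) (L : List (R × R × List R)),
    IsTauFactorization τ a lam (L.map (·.1)) →
    (∀ p ∈ L, IsTauFactorization τ p.1 p.2.1 p.2.2) →
    IsTauFactorization τ a (lam * (L.map (·.2.1)).prod) (L.flatMap (·.2.2))

/-- A `τ`-r-atom: a regular nonzero non-unit all of whose
`τ`-regular-factorizations are trivial. -/
def IsTauRAtom {R : Type*} [CommRing R] (τ : R → R → Prop) (a : R) : Prop :=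
  a ∈ nonZeroDivisors R ∧ a ≠ 0 ∧ ¬ IsUnit a ∧
    ∀ (lam : R) (l : List R), IsTauFactorization τ a lam l → l.length = 1

/-- A "bad" element: regular nonzero non-unit with no atomic τ-factorization. -/
def TauBad {R : Type*} [CommRing R] (τ : R → R → Prop) (x : R) : Prop :=
  x ∈ nonZeroDivisors R ∧ x ≠ 0 ∧ ¬ IsUnit x ∧
    ¬ ∃ (lam : R) (l : List R), IsTauFactorization τ x lam l ∧ ∀ b ∈ l, IsTauRAtom τ b

lemma tauBad_step {R : Type*} [CommRing R] (τ : R → R → Prop) (href : TauRefinable τ)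
    {a : R} (ha : TauBad τ a) :
    ∃ b, TauBad τ b ∧ (∃ (lam : R) (l : List R), IsTauFactorization τ a lam l ∧ b ∈ l) ∧
      Ideal.span ({a} : Set R) < Ideal.span {b} := by
  classical
  obtain ⟨hreg, hne, hnu, hnofact⟩ := ha
  have hnatom : ¬ IsTauRAtom τ a := by
    intro hat
    exact hnofact ⟨1, [a], ⟨isUnit_one, by simp [hne, hnu], by simp, by simp⟩,
      by simpa using hat⟩
  have hex : ∃ lam l, IsTauFactorization τ a lam l ∧ l.length ≠ 1 := by
    by_contra h
    push_neg at h
    exact hnatom ⟨hreg, hne, hnu, fun lam l hf => h lam l hf⟩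
  obtain ⟨lam, l, hfact, hlen⟩ := hex
  obtain ⟨hlamu, hfac, hpw, heq⟩ := hfact
  have hl2 : 2 ≤ l.length := by
    rcases l with _ | ⟨x, _ | ⟨y, t⟩⟩
    · exfalso; apply hnu; rw [heq]; simpa using hlamu
    · simp at hlen
    · simp
  have hbfac : ∀ b ∈ l, a = b * (lam * (l.erase b).prod) := by
    intro b hb
    rw [heq, ← List.prod_erase hb]; ring
  have hbreg : ∀ b ∈ l, b ∈ nonZeroDivisors R := by
    intro b hb
    rw [mem_nonZeroDivisors_iff_right]
    intro x hx
    apply mem_nonZeroDivisors_iff_right.mp hreg x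
    rw [hbfac b hb, ← mul_assoc, hx, zero_mul]
  have hbspan : ∀ b ∈ l, Ideal.span ({a} : Set R) < Ideal.span {b} := by
    intro b hb
    have hle : Ideal.span ({a} : Set R) ≤ Ideal.span {b} :=
      Ideal.span_singleton_le_span_singleton.mpr ⟨_, hbfac b hb⟩
    refine lt_of_le_of_ne hle ?_
    intro hspaneq
    obtain ⟨t, hbt⟩ := Ideal.span_singleton_le_span_singleton.mp hspaneq.ge
    set m := lam * (l.erase b).prod with hm
    have h1 : (t * m - 1) * a = 0 := by
      have := hbfac b hb
      calc (t * m - 1) * a = (a * t) * m - a := by ring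
      _ = b * m - a := by rw [← hbt]
      _ = 0 := by rw [← hbfac b hb]; ring
    have h2 : t * m = 1 := sub_eq_zero.mp (mem_nonZeroDivisors_iff_right.mp hreg _ h1)
    have hum : IsUnit m := IsUnit.of_mul_eq_one (a := m) t (by rw [mul_comm]; exact h2)
    have hpu : IsUnit (l.erase b).prod := by
      have hum' : IsUnit (lam * (l.erase b).prod) := hm ▸ hum
      exact (IsUnit.mul_iff.mp hum').2
    have hne' : l.erase b ≠ [] := by
      intro h
      have := List.length_erase_of_mem hb
      rw [h] at this; simp at this; omega
    obtain ⟨c, hc⟩ := List.exists_mem_of_ne_nil _ hne'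
    have hcu : IsUnit c := List.prod_isUnit_iff.mp hpu c hc
    exact (hfac c (List.mem_of_mem_erase hc)).2 hcu
  have hexbad : ∃ b ∈ l, TauBad τ b := by
    by_contra hno
    push_neg at hno
    have hall : ∀ b : R, ∃ p : R × List R, b ∈ l →
        IsTauFactorization τ b p.1 p.2 ∧ ∀ c ∈ p.2, IsTauRAtom τ c := by
      intro b
      by_cases hb : b ∈ l
      · have hnb := hno b hb
        have hsub : ∃ lam' l', IsTauFactorization τ b lam' l' ∧ ∀ c ∈ l', IsTauRAtom τ c := by
          by_contra hcc
          exact hnb ⟨hbreg b hb, (hfac b hb).1, (hfac b hb).2, hcc⟩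
        obtain ⟨lam', l', h1, h2⟩ := hsub
        exact ⟨(lam', l'), fun _ => ⟨h1, h2⟩⟩
      · exact ⟨(1, []), fun h => absurd h hb⟩
    choose F hF using hall
    set L : List (R × R × List R) := l.map (fun b => (b, F b)) with hL
    have hmap : L.map (·.1) = l := by
      simp only [hL, List.map_map]
      exact List.map_id l
    have hfa := href a lam L (by rw [hmap]; exact ⟨hlamu, hfac, hpw, heq⟩)
      (by
        intro p hp
        rw [hL, List.mem_map] at hp
        obtain ⟨b, hb, rfl⟩ := hp
        exact (hF b hb).1)
    apply hnofact
    refine ⟨_, _, hfa, ?_⟩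
    intro c hc
    rw [List.mem_flatMap] at hc
    obtain ⟨p, hp, hcp⟩ := hc
    rw [hL, List.mem_map] at hp
    obtain ⟨b, hb, rfl⟩ := hp
    exact (hF b hb).2 c hcp
  obtain ⟨b, hb, hbbad⟩ := hexbad
  exact ⟨b, hbbad, ⟨lam, l, ⟨hlamu, hfac, hpw, heq⟩, hb⟩, hbspan b hb⟩

/-- If `τ` is refinable and `R` satisfies `τ`-r-ACCP, then `R` is `τ`-r-atomic:
every regular nonzero non-unit has a `τ`-regular-factorization into `τ`-r-atoms. -/
theorem stmt_12 {R : Type*} [CommRing R] (τ : R → R → Prop)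
    (hsym : ∀ x y, τ x y → τ y x) (href : TauRefinable τ)
    (hACCP : ¬ ∃ c : ℕ → R,
      (∀ i, c i ∈ nonZeroDivisors R ∧ c i ≠ 0 ∧ ¬ IsUnit (c i)) ∧
      (∀ i, ∃ (lam : R) (l : List R),
        IsTauFactorization τ (c i) lam l ∧ c (i + 1) ∈ l) ∧
      (∀ i, Ideal.span ({c i} : Set R) < Ideal.span {c (i + 1)})) :
    ∀ a : R, a ∈ nonZeroDivisors R → a ≠ 0 → ¬ IsUnit a →
      ∃ (lam : R) (l : List R), IsTauFactorization τ a lam l ∧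
        ∀ b ∈ l, IsTauRAtom τ b := by
  classical
  intro a hreg hne hnu
  by_contra hnofact
  have ha : TauBad τ a := ⟨hreg, hne, hnu, hnofact⟩
  apply hACCP
  have step := fun (x : {y : R // TauBad τ y}) => tauBad_step τ href x.2
  let f : {y : R // TauBad τ y} → {y : R // TauBad τ y} :=
    fun x => ⟨(step x).choose, (step x).choose_spec.1⟩
  let c : ℕ → {y : R // TauBad τ y} := fun n => f^[n] ⟨a, ha⟩
  have hsucc : ∀ i, c (i + 1) = f (c i) := fun i => Function.iterate_succ_apply' f i _
  refine ⟨fun n => (c n).1, ?_, ?_, ?_⟩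
  · intro i; exact ⟨(c i).2.1, (c i).2.2.1, (c i).2.2.2.1⟩
  · intro i
    obtain ⟨lam, l, h1, h2⟩ := (step (c i)).choose_spec.2.1
    refine ⟨lam, l, h1, ?_⟩
    show (c (i + 1)).1 ∈ l
    rw [show (c (i + 1)).1 = (f (c i)).1 from congrArg Subtype.val (hsucc i)]
    exact h2
  · intro i
    have h := (step (c i)).choose_spec.2.2
    show Ideal.span {(c i).1} < Ideal.span {(c (i + 1)).1}
    rw [show (c (i + 1)).1 = (f (c i)).1 from congrArg Subtype.val (hsucc i)]
    exact h
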